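/- arXiv:1312.2078 — 3 statements merged into one kernel-verified Lean document; each statement's English description precedes it below -/
import Mathlib

section
/- Let (U,·) be a left symmetric algebra and Φ(U) = U ⊕ U* with the symmetric pairing ⟨u+α, v+β⟩₀ = α(v) + β(u). Then the bracket [X+α, Y+β]^▷ = [X,Y] − L_X^t β + L_Y^t α makes (Φ(U), [·,·]^▷, ⟨·,·⟩₀) a flat pseudo-Riemannian Lie algebra: the product ▷ given by (X+α) ▷ (Y+β) = X·Y − L_X^t β is Lie-admissible with commutator [·,·]^▷, each left multiplication by ▷ is skew-symmetric with respect to ⟨·,·⟩₀, and ▷ satisfies the Koszul formula 2⟨a▷b,c⟩₀ = ⟨[a,b]^▷,c⟩₀ + ⟨[c,a]^▷,b⟩₀ + ⟨[c,b]^▷,a⟩₀, i.e., ▷ is the Levi-Civita product of ⟨·,·⟩₀ and it is left symmetric (flat). -/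
variable {k U : Type*} [Field k] [AddCommGroup U] [Module k U]

/-- The commutator bracket of a bilinear product. -/
def pkBracket (mul : U →ₗ[k] U →ₗ[k] U) (a b : U) : U := mul a b - mul b a

/-- The product `(X+α) ▷ (Y+β) = X·Y − L_X^t β` on the phase space `Φ(U) = U ⊕ U*`. -/
def phaseProd (mul : U →ₗ[k] U →ₗ[k] U)
    (p q : U × Module.Dual k U) : U × Module.Dual k U :=
  (mul p.1 q.1, - (mul p.1).dualMap q.2)

/-- The bracket `[X+α, Y+β]^▷ = [X,Y] − L_X^t β + L_Y^t α` on `Φ(U)`. -/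
def phaseBr (mul : U →ₗ[k] U →ₗ[k] U)
    (p q : U × Module.Dual k U) : U × Module.Dual k U :=
  (pkBracket mul p.1 q.1, - (mul p.1).dualMap q.2 + (mul q.1).dualMap p.2)

/-- The canonical hyperbolic symmetric pairing `⟨u+α, v+β⟩₀ = α(v) + β(u)` on `Φ(U)`. -/
def phasePair (p q : U × Module.Dual k U) : k := p.2 q.1 + q.2 p.1

/-- `(Φ(U), [·,·]^▷, ⟨·,·⟩₀)` is a flat pseudo-Riemannian Lie algebra: the commutator of
`▷` is `[·,·]^▷` which satisfies the Jacobi identity, left ▷-multiplications are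
skew-symmetric for `⟨·,·⟩₀`, `▷` satisfies the Koszul formula (so it is the Levi-Civita
product of `⟨·,·⟩₀`), and `▷` is left symmetric (flat). -/
theorem phasePair_flat_pseudoRiemannian [FiniteDimensional k U]
    (h2 : (2 : k) ≠ 0)
    (mul : U →ₗ[k] U →ₗ[k] U)
    (hls : ∀ u v w : U,
      mul (mul u v) w - mul u (mul v w) = mul (mul v u) w - mul v (mul u w)) :
    (∀ p q : U × Module.Dual k U,
      phaseProd mul p q - phaseProd mul q p = phaseBr mul p q) ∧
    (∀ p q r : U × Module.Dual k U,
      phaseBr mul p (phaseBr mul q r) + phaseBr mul q (phaseBr mul r p) +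
        phaseBr mul r (phaseBr mul p q) = 0) ∧
    (∀ p q r : U × Module.Dual k U,
      phasePair (k := k) (phaseProd mul p q) r + phasePair q (phaseProd mul p r) = 0) ∧
    (∀ p q r : U × Module.Dual k U,
      2 * phasePair (k := k) (phaseProd mul p q) r
        = phasePair (k := k) (phaseBr mul p q) r + phasePair (k := k) (phaseBr mul r p) q +
          phasePair (k := k) (phaseBr mul r q) p) ∧
    (∀ p q r : U × Module.Dual k U,
      phaseProd mul (phaseProd mul p q) r - phaseProd mul p (phaseProd mul q r)
        = phaseProd mul (phaseProd mul q p) r - phaseProd mul q (phaseProd mul p r)) := by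
  have key : ∀ (f : Module.Dual k U) (u v w : U),
      f (mul (mul u v) w) - f (mul u (mul v w))
        = f (mul (mul v u) w) - f (mul v (mul u w)) := by
    intro f u v w
    have := congrArg (⇑f) (hls u v w)
    simpa [map_sub] using this
  refine ⟨?_, ?_, ?_, ?_, ?_⟩
  · intro p q
    refine Prod.ext ?_ ?_
    · simp [phaseProd, phaseBr, pkBracket]
    · refine LinearMap.ext fun w => ?_
      simp [phaseProd, phaseBr, pkBracket]
  · intro p q r
    refine Prod.ext ?_ ?_
    · simp only [phaseBr, pkBracket, map_sub, LinearMap.sub_apply, Prod.fst_add, Prod.fst_zero]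
      linear_combination (norm := module)
        -(hls p.1 q.1 r.1) - hls q.1 r.1 p.1 - hls r.1 p.1 q.1
    · refine LinearMap.ext fun w => ?_
      simp only [phaseBr, pkBracket, map_sub, map_add, map_neg, LinearMap.dualMap_apply,
        LinearMap.add_apply, LinearMap.neg_apply, LinearMap.sub_apply, Prod.snd_add,
        Prod.snd_zero, LinearMap.zero_apply]
      linear_combination key p.2 q.1 r.1 w + key q.2 r.1 p.1 w + key r.2 p.1 q.1 w
  · intro p q r
    simp [phasePair, phaseProd]
    ring
  · intro p q r
    simp [phasePair, phaseProd, phaseBr, pkBracket, map_sub]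
    ring
  · intro p q r
    refine Prod.ext ?_ ?_
    · simpa [phaseProd] using hls p.1 q.1 r.1
    · refine LinearMap.ext fun w => ?_
      simp only [phaseProd, map_neg, map_sub, LinearMap.dualMap_apply, LinearMap.neg_apply,
        LinearMap.sub_apply, Prod.snd_sub]
      linear_combination -(key r.2 p.1 q.1 w)
end

section
/- Let (U,·,ω) be a symplectic associative algebra (associative product with nondegenerate skew ω satisfying ω(u·v,w) + ω(v,u·w) = 0). Then U⁴ = 0, i.e., any product of four elements (in any parenthesization) vanishes: u·(v·(w·x)) = 0 for all u,v,w,x ∈ U. -/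
/-- In a symplectic associative algebra, `U⁴ = 0`: any product of four elements
vanishes. -/
theorem symplectic_associative_fourth_power_zero
    {k U : Type*} [Field k] [AddCommGroup U] [Module k U]
    [FiniteDimensional k U]
    (h2 : (2 : k) ≠ 0)
    (mul : U →ₗ[k] U →ₗ[k] U)
    (hassoc : ∀ u v w : U, mul (mul u v) w = mul u (mul v w))
    (ω : U →ₗ[k] U →ₗ[k] k)
    (hskew : ∀ u v : U, ω u v = - ω v u)
    (hnd : ∀ u : U, (∀ v : U, ω u v = 0) → u = 0)
    (hinv : ∀ u v w : U, ω (mul u v) w + ω v (mul u w) = 0)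
    (u v w x : U) :
    mul u (mul v (mul w x)) = 0 := by
  -- key : L_{ab} = - L_{ba}
  have key : ∀ a b t : U, mul (mul a b) t = - mul (mul b a) t := by
    intro a b t
    have h := hnd (mul (mul a b) t + mul (mul b a) t) ?_
    · exact eq_neg_of_add_eq_zero_left h
    intro s
    rw [map_add, LinearMap.add_apply]
    have h1 := hinv (mul a b) t s
    have h2' := hinv a t (mul b s)
    have h5 := hinv b s (mul a t)
    have hs1 := hskew (mul a t) (mul b s)
    have hs2 := hskew s (mul b (mul a t))
    rw [hassoc a b s] at h1
    rw [hassoc b a t]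
    linear_combination h1 - h2' + hs1 - h5 + hs2
  have e1 := key (mul u v) w x
  have e2 := key (mul w u) v x
  have e3 := key (mul v w) u x
  rw [hassoc u v w] at e1
  rw [hassoc w u v] at e2
  rw [hassoc v w u] at e3
  have h2T : mul (mul u (mul v w)) x + mul (mul u (mul v w)) x = 0 := by
    nth_rewrite 1 [e1]
    rw [e2, e3]
    abel
  have hz : (2 : k) • mul (mul u (mul v w)) x = 0 := by rw [two_smul]; exact h2T
  have := (smul_eq_zero.mp hz).resolve_left h2
  rw [← hassoc v w x, ← hassoc u (mul v w) x]
  exact this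
end

section
/- Let (U,·,ω) be an abelian (commutative) symplectic associative algebra: · is associative and commutative, ω is nondegenerate skew-symmetric with ω(u·v,w) + ω(v,u·w) = 0. Then U²·U² = 0 and ω(U²,U²) = 0; in particular (u·v)·(w·x) = 0 and ω(u·v, w·x) = 0 for all u,v,w,x. -/
/-- In a commutative symplectic associative algebra, `U²·U² = 0` and `ω(U²,U²) = 0`:
`(u·v)·(w·x) = 0` and `ω(u·v, w·x) = 0` for all `u,v,w,x`. -/
theorem abelian_symplectic_associative_square
    {k U : Type*} [Field k] [AddCommGroup U] [Module k U]
    [FiniteDimensional k U]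
    (h2 : (2 : k) ≠ 0)
    (mul : U →ₗ[k] U →ₗ[k] U)
    (hassoc : ∀ u v w : U, mul (mul u v) w = mul u (mul v w))
    (hcomm : ∀ u v : U, mul u v = mul v u)
    (ω : U →ₗ[k] U →ₗ[k] k)
    (hskew : ∀ u v : U, ω u v = - ω v u)
    (hnd : ∀ u : U, (∀ v : U, ω u v = 0) → u = 0)
    (hinv : ∀ u v w : U, ω (mul u v) w + ω v (mul u w) = 0)
    (u v w x : U) :
    mul (mul u v) (mul w x) = 0 ∧ ω (mul u v) (mul w x) = 0 := by
  -- ω(ab,c) is symmetric in b,c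
  have hsym : ∀ a b c : U, ω (mul a b) c = ω (mul a c) b := by
    intro a b c
    have h1 := hinv a b c
    have h2 := hskew b (mul a c)
    linear_combination h1 - h2
  -- key lemma: ω((ab)c, d) = 0
  have hg : ∀ a b c d : U, ω (mul (mul a b) c) d = 0 := by
    intro a b c d
    -- symmetry: g(a,b,c,d) = g(b,a,d,c)
    have e1 : ω (mul (mul a b) c) d = ω (mul (mul b a) d) c := by
      rw [hcomm a b, hsym]
    -- antisymmetry: g(a,b,c,d) = - g(b,a,d,c)
    have e2 : ω (mul (mul a b) c) d = - ω (mul (mul b a) d) c := by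
      have h1 : mul (mul a b) c = mul a (mul b c) := hassoc a b c
      have h2 : ω (mul a (mul b c)) d = - ω (mul b c) (mul a d) := by
        linear_combination hinv a (mul b c) d
      have h3 : ω (mul b c) (mul a d) = - ω c (mul b (mul a d)) := by
        linear_combination hinv b c (mul a d)
      have h4 : ω c (mul b (mul a d)) = - ω (mul b (mul a d)) c := hskew _ _
      have h5 : mul b (mul a d) = mul (mul b a) d := (hassoc b a d).symm
      rw [h1, h2, h3, h4, h5]; ring
    have h2g : (2 : k) * ω (mul (mul a b) c) d = 0 := by linear_combination e1 + e2
    rcases mul_eq_zero.mp h2g with h | h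
    · exact absurd h h2
    · exact h
  constructor
  · apply hnd
    intro y
    have h : mul (mul u v) (mul w x) = mul (mul (mul u v) w) x := (hassoc _ _ _).symm
    rw [h]
    exact hg (mul u v) w x y
  · have h1 : ω (mul u v) (mul w x) = - ω v (mul u (mul w x)) := by
      linear_combination hinv u v (mul w x)
    have h2 : ω v (mul u (mul w x)) = - ω (mul u (mul w x)) v := hskew _ _
    have h3 : mul u (mul w x) = mul (mul u w) x := (hassoc u w x).symm
    rw [h1, h2, h3, hg u w x v]
    ring
end
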